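/- Let X ∈ ℝ^{n×p} have full row rank (rank(X) = n), let i ∈ {1,…,n}, and let X_{∼i} ∈ ℝ^{(n−1)×p} be X with its i-th row removed. Then [(X_{∼i})ᵀ X_{∼i}]† = X† { I_n − (e_i e_iᵀ G_X)/(e_iᵀ G_X e_i) − (G_X e_i e_iᵀ)/(e_iᵀ G_X e_i) + (e_iᵀ G_X² e_i)/(e_iᵀ G_X e_i)² · e_i e_iᵀ } (X†)ᵀ. -/

import Mathlib

set_option linter.unusedSectionVars false
set_option linter.unusedTactic false
set_option maxHeartbeats 1000000

open Matrix BigOperators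

noncomputable section

/-- `B` is the Moore–Penrose pseudoinverse of `A`. -/
def IsMPInv {m n : Type*} [Fintype m] [Fintype n]
    (A : Matrix m n ℝ) (B : Matrix n m ℝ) : Prop :=
  A * B * A = A ∧ B * A * B = B ∧ (A * B)ᵀ = A * B ∧ (B * A)ᵀ = B * A

/-- Remove the `i`-th row of a matrix. -/
def dropRow {n q : ℕ} (A : Matrix (Fin (n + 1)) (Fin q) ℝ) (i : Fin (n + 1)) :
    Matrix (Fin n) (Fin q) ℝ :=
  Matrix.of fun j k => A (i.succAbove j) k

/-! ### Auxiliary lemmas -/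

lemma mp_unique {m n : Type*} [Fintype m] [Fintype n]
    {A : Matrix m n ℝ} {B C : Matrix n m ℝ}
    (hB : IsMPInv A B) (hC : IsMPInv A C) : B = C := by
  obtain ⟨hB1, hB2, hB3, hB4⟩ := hB
  obtain ⟨hC1, hC2, hC3, hC4⟩ := hC
  have h1 : A * B = A * C := by
    calc A * B = (A * B)ᵀ := hB3.symm
      _ = (A * C * (A * B))ᵀ := by rw [← Matrix.mul_assoc, hC1]
      _ = (A * B)ᵀ * (A * C)ᵀ := Matrix.transpose_mul (A*C) (A*B)
      _ = (A * B) * (A * C) := by rw [hB3, hC3]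
      _ = A * C := by rw [← Matrix.mul_assoc, hB1]
  have h2 : B * A = C * A := by
    calc B * A = (B * A) * (C * A) := by
          rw [Matrix.mul_assoc, ← Matrix.mul_assoc A C A, hC1]
      _ = (B * A)ᵀ * (C * A)ᵀ := by rw [hB4, hC4]
      _ = ((C * A) * (B * A))ᵀ := (Matrix.transpose_mul (C*A) (B*A)).symm
      _ = (C * A)ᵀ := by rw [Matrix.mul_assoc, ← Matrix.mul_assoc A B A, hB1]
      _ = C * A := hC4
  calc B = B * A * B := hB2.symm
    _ = C * A * B := by rw [h2]
    _ = C * (A * B) := Matrix.mul_assoc ..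
    _ = C * (A * C) := by rw [h1]
    _ = C * A * C := (Matrix.mul_assoc ..).symm
    _ = C := hC2

lemma posdef_S {n p : ℕ} (X : Matrix (Fin (n + 1)) (Fin p) ℝ) (hX : X.rank = n + 1) :
    (X * Xᵀ).PosDef := by
  have hrt : Xᵀ.rank = n + 1 := by rw [Matrix.rank_transpose]; exact hX
  have hker : LinearMap.ker Xᵀ.mulVecLin = ⊥ := by
    have hadd := Xᵀ.mulVecLin.finrank_range_add_finrank_ker
    rw [Matrix.rank] at hrt
    rw [hrt] at hadd
    simp only [Module.finrank_pi, Fintype.card_fin] at hadd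
    have h0 : Module.finrank ℝ (LinearMap.ker Xᵀ.mulVecLin) = 0 := by omega
    exact Submodule.finrank_eq_zero.mp h0
  have hinj : Function.Injective Xᵀ.mulVecLin := LinearMap.ker_eq_bot.mp hker
  refine Matrix.posDef_iff_dotProduct_mulVec.mpr ⟨?_, ?_⟩
  · have := Matrix.isHermitian_mul_conjTranspose_self X
    rwa [Matrix.conjTranspose_eq_transpose_of_trivial] at this
  · intro x hx
    have hXx : Xᵀ *ᵥ x ≠ 0 := by
      intro h
      apply hx
      apply hinj
      have h2 : x ᵥ* X = 0 := by rwa [Matrix.mulVec_transpose] at h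
      show Xᵀ.mulVecLin x = Xᵀ.mulVecLin 0
      simp [Matrix.mulVecLin_apply, Matrix.mulVec_transpose, h2]
    have : star x ⬝ᵥ ((X * Xᵀ) *ᵥ x) = (Xᵀ *ᵥ x) ⬝ᵥ (Xᵀ *ᵥ x) := by
      rw [← Matrix.mulVec_mulVec, Matrix.dotProduct_mulVec]
      congr 1
      ext a
      simp [Matrix.vecMul, Matrix.mulVec, dotProduct, star_trivial, mul_comm]
    rw [this]
    have hnn : 0 ≤ (Xᵀ *ᵥ x) ⬝ᵥ (Xᵀ *ᵥ x) := by
      apply Finset.sum_nonneg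
      intro k _
      exact mul_self_nonneg _
    rcases hnn.lt_or_eq with h | h
    · exact h
    · exact absurd (dotProduct_self_eq_zero.mp h.symm) hXx

section EFacts

variable {ι κ : Type*} [Fintype ι] [Fintype κ] [DecidableEq ι]

lemma E_mul_N (i : ι) (N : Matrix ι κ ℝ) :
    vecMulVec (Pi.single i (1:ℝ)) (Pi.single i (1:ℝ)) * N = vecMulVec (Pi.single i 1) (N i) := by
  ext a b
  simp [Matrix.mul_apply, Matrix.vecMulVec_apply, Pi.single_apply]

lemma N_mul_E (i : ι) (N : Matrix κ ι ℝ) :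
    N * vecMulVec (Pi.single i (1:ℝ)) (Pi.single i (1:ℝ))
      = vecMulVec (fun a => N a i) (Pi.single i 1) := by
  ext a b
  simp [Matrix.mul_apply, Matrix.vecMulVec_apply, Pi.single_apply]

lemma E_N_E (i : ι) (N : Matrix ι ι ℝ) :
    vecMulVec (Pi.single i (1:ℝ)) (Pi.single i (1:ℝ)) * N
        * vecMulVec (Pi.single i (1:ℝ)) (Pi.single i (1:ℝ))
      = N i i • vecMulVec (Pi.single i 1) (Pi.single i 1) := by
  rw [E_mul_N, N_mul_E]
  ext a b
  simp only [Matrix.vecMulVec_apply, Matrix.smul_apply, Pi.single_apply, smul_eq_mul]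
  rcases eq_or_ne a i with rfl | ha
  · simp
  · simp [ha]

end EFacts

section Algebra

variable {ι : Type*} [Fintype ι] [DecidableEq ι]
variable (i : ι) (G S : Matrix ι ι ℝ)

local notation "E" => vecMulVec (Pi.single i (1:ℝ)) (Pi.single i (1:ℝ))
local notation "M" => (1 : Matrix ι ι ℝ) - (G i i)⁻¹ • (E * G) - (G i i)⁻¹ • (G * E)
    + (((G * G) i i) / (G i i) ^ 2) • E
local notation "K" => G - (G i i)⁻¹ • (G * (E * G))

lemma Et : (E)ᵀ = E := by
  ext a b
  simp [Matrix.vecMulVec_apply, mul_comm]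

lemma EE : E * E = E := by
  have := E_N_E i (1 : Matrix ι ι ℝ)
  simpa using this

lemma EEx (x : Matrix ι ι ℝ) : E * (E * x) = E * x := by
  rw [← Matrix.mul_assoc, EE]

lemma collapseNx (N x : Matrix ι ι ℝ) :
    E * (N * (E * x)) = N i i • (E * x) := by
  rw [← Matrix.mul_assoc, ← Matrix.mul_assoc, E_N_E, smul_mul_assoc]

lemma collapseN (N : Matrix ι ι ℝ) : E * (N * E) = N i i • E := by
  rw [← Matrix.mul_assoc, E_N_E]

lemma cGx (x : Matrix ι ι ℝ) : E * (G * (E * x)) = G i i • (E * x) := collapseNx i G x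

lemma cG : E * (G * E) = G i i • E := collapseN i G

lemma cGGx (x : Matrix ι ι ℝ) : E * (G * (G * (E * x))) = (G * G) i i • (E * x) := by
  rw [← Matrix.mul_assoc G G]
  exact collapseNx i (G * G) x

lemma cGG : E * (G * (G * E)) = (G * G) i i • E := by
  rw [← Matrix.mul_assoc G G]
  exact collapseN i (G * G)

variable (hg : G i i ≠ 0) (hSG : S * G = 1) (hGS : G * S = 1) (hGt : Gᵀ = G)

include hSG in
lemma hSGx (x : Matrix ι ι ℝ) : S * (G * x) = x := by
  rw [← Matrix.mul_assoc, hSG, one_mul]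

include hGS in
lemma hGSx (x : Matrix ι ι ℝ) : G * (S * x) = x := by
  rw [← Matrix.mul_assoc, hGS, one_mul]

include hg hSG hGS in
lemma J1 : (1 - E) * (S * (G * (M * G))) = K := by
  simp only [Matrix.mul_assoc, mul_sub, sub_mul, mul_add, add_mul, mul_one, one_mul,
    smul_mul_assoc, mul_smul_comm, smul_sub, smul_add, smul_smul, pow_two, hSGx G S hSG,
    hGSx G S hGS, hSG, hGS, EE, EEx i, cGx i G, cG i G, cGGx i G, cGG i G]
  match_scalars <;> field_simp [hg] <;> ring

include hg hSG hGS in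
lemma J2 : (G * (M * G)) * (S * (1 - E)) = K := by
  simp only [Matrix.mul_assoc, mul_sub, sub_mul, mul_add, add_mul, mul_one, one_mul,
    smul_mul_assoc, mul_smul_comm, smul_sub, smul_add, smul_smul, pow_two, hSGx G S hSG,
    hGSx G S hGS, hSG, hGS, EE, EEx i, cGx i G, cG i G, cGGx i G, cGG i G]
  match_scalars <;> field_simp [hg] <;> ring

include hg hSG hGS in
lemma J3 : K * (S * (1 - E)) = 1 - E := by
  simp only [Matrix.mul_assoc, mul_sub, sub_mul, mul_add, add_mul, mul_one, one_mul,
    smul_mul_assoc, mul_smul_comm, smul_sub, smul_add, smul_smul, pow_two, hSGx G S hSG,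
    hGSx G S hGS, hSG, hGS, EE, EEx i, cGx i G, cG i G, cGGx i G, cGG i G]
  match_scalars <;> field_simp [hg] <;> ring

include hg hSG hGS in
lemma J4 : K * (S * (G * (M * G))) = G * (M * G) := by
  simp only [Matrix.mul_assoc, mul_sub, sub_mul, mul_add, add_mul, mul_one, one_mul,
    smul_mul_assoc, mul_smul_comm, smul_sub, smul_add, smul_smul, pow_two, hSGx G S hSG,
    hGSx G S hGS, hSG, hGS, EE, EEx i, cGx i G, cG i G, cGGx i G, cGG i G]
  match_scalars <;> field_simp [hg] <;> ring

include hGt in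
lemma J5 : (K)ᵀ = K := by
  simp only [Matrix.transpose_sub, Matrix.transpose_smul, Matrix.transpose_mul, Et i, hGt,
    Matrix.mul_assoc]

include hg hSG hGS hGt in
lemma sandwich_MP {κ : Type*} [Fintype κ] (X : Matrix ι κ ℝ)
    (hXS : X * Xᵀ = S) :
    IsMPInv (Xᵀ * (((1 : Matrix ι ι ℝ) - E) * X)) (Xᵀ * ((G * (M * G)) * X)) := by
  have sand_mul : ∀ U V : Matrix ι ι ℝ,
      (Xᵀ * (U * X)) * (Xᵀ * (V * X)) = Xᵀ * ((U * (S * V)) * X) := by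
    intro U V
    calc (Xᵀ * (U * X)) * (Xᵀ * (V * X))
        = Xᵀ * (U * (X * (Xᵀ * (V * X)))) := by simp only [Matrix.mul_assoc]
      _ = Xᵀ * (U * ((X * Xᵀ) * (V * X))) := by rw [Matrix.mul_assoc X Xᵀ (V * X)]
      _ = Xᵀ * ((U * (S * V)) * X) := by rw [hXS]; simp only [Matrix.mul_assoc]
  have sand_t : ∀ U : Matrix ι ι ℝ, (Xᵀ * (U * X))ᵀ = Xᵀ * (Uᵀ * X) := by
    intro U
    rw [Matrix.transpose_mul, Matrix.transpose_mul, Matrix.transpose_transpose,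
      Matrix.mul_assoc]
  have j1 := J1 i G S hg hSG hGS
  have j2 := J2 i G S hg hSG hGS
  have j3 := J3 i G S hg hSG hGS
  have j4 := J4 i G S hg hSG hGS
  have j5 := J5 i G hGt
  have hAC : (Xᵀ * (((1 : Matrix ι ι ℝ) - E) * X)) * (Xᵀ * ((G * (M * G)) * X))
      = Xᵀ * (K * X) := by rw [sand_mul, j1]
  have hCA : (Xᵀ * ((G * (M * G)) * X)) * (Xᵀ * (((1 : Matrix ι ι ℝ) - E) * X))
      = Xᵀ * (K * X) := by rw [sand_mul, j2]
  refine ⟨?_, ?_, ?_, ?_⟩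
  · rw [hAC, sand_mul, j3]
  · rw [hCA, sand_mul, j4]
  · rw [hAC, sand_t, j5]
  · rw [hCA, sand_t, j5]

end Algebra

lemma drop_gram {n p : ℕ} (X : Matrix (Fin (n + 1)) (Fin p) ℝ) (i : Fin (n + 1)) :
    (dropRow X i)ᵀ * dropRow X i
      = Xᵀ * (((1 : Matrix (Fin (n+1)) (Fin (n+1)) ℝ)
          - vecMulVec (Pi.single i 1) (Pi.single i 1)) * X) := by
  rw [Matrix.sub_mul, Matrix.one_mul, E_mul_N]
  ext a b
  have h := Fin.sum_univ_succAbove (fun k => X k a * X k b) i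
  simp only [Matrix.mul_apply, Matrix.transpose_apply, dropRow, Matrix.of_apply,
    Matrix.sub_apply, Matrix.vecMulVec_apply, Pi.single_apply, mul_sub, ite_mul, one_mul,
    zero_mul, mul_ite, mul_zero, mul_one]
  rw [Finset.sum_sub_distrib, Finset.sum_ite_eq' Finset.univ i (fun k => X k a * X i b)]
  simp only [Finset.mem_univ, if_true]
  rw [h]
  ring

theorem loo_gram_pseudoinverse
    {n p : ℕ}
    (X : Matrix (Fin (n + 1)) (Fin p) ℝ) (hX : X.rank = n + 1)
    (i : Fin (n + 1))
    (Xp : Matrix (Fin p) (Fin (n + 1)) ℝ) (hXp : IsMPInv X Xp)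
    (GX : Matrix (Fin (n + 1)) (Fin (n + 1)) ℝ) (hGX : IsMPInv (X * Xᵀ) GX)
    (B : Matrix (Fin p) (Fin p) ℝ)
    (hB : IsMPInv ((dropRow X i)ᵀ * dropRow X i) B) :
    B = Xp *
        ((1 : Matrix (Fin (n + 1)) (Fin (n + 1)) ℝ)
          - (GX i i)⁻¹ • vecMulVec (Pi.single i 1 : Fin (n + 1) → ℝ) (GX i)
          - (GX i i)⁻¹ • vecMulVec (fun j => GX j i) (Pi.single i 1 : Fin (n + 1) → ℝ)
          + (((GX * GX) i i) / (GX i i) ^ 2) •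
              vecMulVec (Pi.single i 1 : Fin (n + 1) → ℝ) (Pi.single i 1 : Fin (n + 1) → ℝ))
        * Xpᵀ := by
  have hPD : (X * Xᵀ).PosDef := posdef_S X hX
  have hU : IsUnit (X * Xᵀ) := hPD.isUnit
  have hdet : IsUnit (X * Xᵀ).det := (Matrix.isUnit_iff_isUnit_det _).mp hU
  have hGS : GX * (X * Xᵀ) = 1 := by
    have h1 : (X * Xᵀ) * (GX * (X * Xᵀ)) = X * Xᵀ := by
      rw [← Matrix.mul_assoc]; exact hGX.1
    calc GX * (X * Xᵀ) = ((X * Xᵀ)⁻¹ * (X * Xᵀ)) * (GX * (X * Xᵀ)) := by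
          rw [Matrix.nonsing_inv_mul _ hdet, one_mul]
      _ = (X * Xᵀ)⁻¹ * ((X * Xᵀ) * (GX * (X * Xᵀ))) := by simp only [Matrix.mul_assoc]
      _ = (X * Xᵀ)⁻¹ * (X * Xᵀ) := by rw [h1]
      _ = 1 := Matrix.nonsing_inv_mul _ hdet
  have hSG : (X * Xᵀ) * GX = 1 := by
    have h1 : (X * Xᵀ) * GX * (X * Xᵀ) = X * Xᵀ := hGX.1
    calc (X * Xᵀ) * GX = ((X * Xᵀ) * GX * (X * Xᵀ)) * (X * Xᵀ)⁻¹ := by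
          rw [Matrix.mul_assoc ((X * Xᵀ) * GX) (X * Xᵀ) (X * Xᵀ)⁻¹,
            Matrix.mul_nonsing_inv _ hdet, mul_one]
      _ = (X * Xᵀ) * (X * Xᵀ)⁻¹ := by rw [h1]
      _ = 1 := Matrix.mul_nonsing_inv _ hdet
  have hGXeq : GX = (X * Xᵀ)⁻¹ := by
    calc GX = GX * ((X * Xᵀ) * (X * Xᵀ)⁻¹) := by
          rw [Matrix.mul_nonsing_inv _ hdet, mul_one]
      _ = (GX * (X * Xᵀ)) * (X * Xᵀ)⁻¹ := by
          rw [Matrix.mul_assoc GX (X * Xᵀ) (X * Xᵀ)⁻¹]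
      _ = (X * Xᵀ)⁻¹ := by rw [hGS, one_mul]
  have hSt : (X * Xᵀ)ᵀ = X * Xᵀ := by
    rw [Matrix.transpose_mul, Matrix.transpose_transpose]
  have hGt : GXᵀ = GX := by
    rw [hGXeq, Matrix.transpose_nonsing_inv, hSt]
  have hGXPD : GX.PosDef := by rw [hGXeq]; exact hPD.inv
  have hgpos : 0 < GX i i := by
    have h := hGXPD.dotProduct_mulVec_pos (x := Pi.single i 1) (by
      intro h
      have := congrFun h i
      simp at this)
    have heval : star (Pi.single i (1:ℝ)) ⬝ᵥ (GX *ᵥ Pi.single i 1) = GX i i := by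
      simp [dotProduct, Matrix.mulVec, Pi.single_apply, star_trivial]
    rwa [heval] at h
  have hg : GX i i ≠ 0 := ne_of_gt hgpos
  have hXpeq : Xp = Xᵀ * GX := by
    refine mp_unique hXp ⟨?_, ?_, ?_, ?_⟩
    · have h1 : X * (Xᵀ * GX) * X = ((X * Xᵀ) * GX) * X := by
        simp only [Matrix.mul_assoc]
      rw [h1, hSG, Matrix.one_mul]
    · calc (Xᵀ * GX) * X * (Xᵀ * GX)
          = Xᵀ * (GX * (X * (Xᵀ * GX))) := by simp only [Matrix.mul_assoc]
        _ = Xᵀ * (GX * ((X * Xᵀ) * GX)) := by rw [Matrix.mul_assoc X Xᵀ GX]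
        _ = Xᵀ * (GX * 1) := by rw [hSG]
        _ = Xᵀ * GX := by rw [mul_one]
    · have h1 : X * (Xᵀ * GX) = 1 := by
        rw [← Matrix.mul_assoc, hSG]
      rw [h1, Matrix.transpose_one]
    · have e1 : ((Xᵀ * GX) * X)ᵀ = Xᵀ * (GXᵀ * X) := by
        rw [Matrix.transpose_mul, Matrix.transpose_mul, Matrix.transpose_transpose]
      rw [e1, hGt, ← Matrix.mul_assoc]
  have hXpT : Xpᵀ = GX * X := by
    rw [hXpeq, Matrix.transpose_mul, Matrix.transpose_transpose, hGt]
  have hMP := sandwich_MP i GX (X * Xᵀ) hg hSG hGS hGt X rfl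
  have hAeq : (dropRow X i)ᵀ * dropRow X i
      = Xᵀ * (((1 : Matrix (Fin (n+1)) (Fin (n+1)) ℝ)
          - vecMulVec (Pi.single i 1) (Pi.single i 1)) * X) := drop_gram X i
  rw [hAeq] at hB
  have hBC := mp_unique hB hMP
  rw [hBC, hXpT, hXpeq, ← E_mul_N i GX, ← N_mul_E i GX]
  simp only [Matrix.mul_assoc]

end
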